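/- Let k be a field with algebraic closure k̄ and absolute Galois group G, and let X, Y be finite étale k-schemes. Then the natural base-change map Hom_k(X, Y) → Hom_{k̄}(X_{k̄}, Y_{k̄}) is injective with image exactly the G-fixed points: Hom_k(X,Y) ≅ Hom_{k̄}(X_{k̄}, Y_{k̄})^G. -/

import Mathlib

open scoped TensorProduct

set_option maxHeartbeats 1000000
set_option synthInstance.maxHeartbeats 400000

open Polynomial

section helpers

variable {k kbar : Type} [Field k] [Field kbar] [Algebra k kbar]

/-- An element of `k̄` fixed by all `k`-automorphisms whose minimal polynomial is
separable lies in `k`. -/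
lemma fixed_sep_mem [IsAlgClosure k kbar] (c : kbar)
    (hsep : (minpoly k c).Separable)
    (hfix : ∀ g : kbar ≃ₐ[k] kbar, g c = c) :
    c ∈ (algebraMap k kbar).range := by
  classical
  haveI : IsAlgClosed kbar := IsAlgClosure.isAlgClosed k
  haveI : Algebra.IsAlgebraic k kbar := IsAlgClosure.isAlgebraic
  have hint : IsIntegral k c := Algebra.IsIntegral.isIntegral c
  have hne : minpoly k c ≠ 0 := (minpoly.monic hint).ne_zero
  rw [← minpoly.degree_eq_one_iff]
  set p := (minpoly k c).map (algebraMap k kbar) with hp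
  have hpne : p ≠ 0 := (Polynomial.map_ne_zero_iff (algebraMap k kbar).injective).mpr hne
  have hsplit : p.Splits := IsAlgClosed.splits _
  have hroot : ∀ r ∈ p.roots, r = c := by
    intro r hr
    have hev : (Polynomial.aeval r) (minpoly k c) = 0 := by
      have := (Polynomial.mem_roots hpne).mp hr
      rwa [hp, Polynomial.IsRoot, Polynomial.eval_map, ← Polynomial.aeval_def] at this
    obtain ⟨σ, hσ⟩ := minpoly.exists_algEquiv_of_root'
      (Algebra.IsAlgebraic.isAlgebraic (R := k) c) hev
    rw [← hσ, hfix σ]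
  have hcmem : c ∈ p.roots := by
    rw [Polynomial.mem_roots hpne, hp, Polynomial.IsRoot, Polynomial.eval_map,
      ← Polynomial.aeval_def]
    exact minpoly.aeval k c
  have hnodup : p.roots.Nodup := Polynomial.nodup_roots (hsep.map)
  have hcard : p.roots.card = 1 := by
    have htf : p.roots.toFinset = {c} :=
      Finset.eq_singleton_iff_unique_mem.mpr
        ⟨Multiset.mem_toFinset.mpr hcmem, fun x hx => hroot x (Multiset.mem_toFinset.mp hx)⟩
    rw [← Multiset.toFinset_card_of_nodup hnodup, htf, Finset.card_singleton]
  have hnd : (minpoly k c).natDegree = 1 := by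
    rw [← Polynomial.natDegree_map (algebraMap k kbar)]
    exact hsplit.natDegree_eq_card_roots.trans hcard
  rw [Polynomial.degree_eq_natDegree hne, hnd]
  rfl



/-- Values of a `k`-algebra hom from a finite unramified `k`-algebra into a field
extension have separable minimal polynomials. -/
lemma sepVal {R : Type} [CommRing R] [Algebra k R]
    [Algebra.FormallyUnramified k R] [Module.Finite k R]
    (σ : R →ₐ[k] kbar) (r : R) : (minpoly k (σ r)).Separable := by
  have hsurj : Function.Surjective σ.rangeRestrict := σ.rangeRestrict_surjective
  haveI : Module.Finite k σ.range :=
    Module.Finite.of_surjective σ.rangeRestrict.toLinearMap hsurj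
  haveI : Algebra.FormallyUnramified k σ.range :=
    Algebra.FormallyUnramified.of_surjective σ.rangeRestrict hsurj
  haveI : Algebra.IsIntegral k σ.range := Algebra.IsIntegral.of_finite k _
  have hfield : IsField σ.range :=
    (Algebra.IsIntegral.isField_iff_isField
      (algebraMap k σ.range).injective).mp (Field.toIsField k)
  letI : Field σ.range := hfield.toField
  haveI : Algebra.IsSeparable k σ.range :=
    Algebra.FormallyUnramified.isSeparable k σ.range
  have h := Algebra.IsSeparable.isSeparable k (⟨σ r, ⟨r, rfl⟩⟩ : σ.range)
  rwa [IsSeparable, ← minpoly.algHom_eq σ.range.val Subtype.val_injective] at h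

/-- In a finite unramified algebra over an algebraically closed field, the characters
jointly separate points. -/
lemma charsInj {kbar C : Type} [Field kbar] [IsAlgClosed kbar] [CommRing C]
    [Algebra kbar C] [Algebra.FormallyUnramified kbar C] [Module.Finite kbar C]
    (z : C) (hz : ∀ φ : C →ₐ[kbar] kbar, φ z = 0) : z = 0 := by
  haveI : IsArtinianRing C := isArtinian_of_tower kbar inferInstance
  haveI : IsReduced C := Algebra.FormallyUnramified.isReduced_of_field kbar C
  have hmem : z ∈ Ideal.jacobson (⊥ : Ideal C) := by
    rw [Ideal.jacobson]
    refine Ideal.mem_sInf.mpr ?_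
    rintro m ⟨-, hm⟩
    haveI := hm
    letI : Field (C ⧸ m) := Ideal.Quotient.field m
    haveI : Module.Finite kbar (C ⧸ m) :=
      Module.Finite.of_surjective (Ideal.Quotient.mkₐ kbar m).toLinearMap
        Ideal.Quotient.mk_surjective
    haveI : Algebra.IsIntegral kbar (C ⧸ m) := Algebra.IsIntegral.of_finite kbar _
    have hbij : Function.Bijective (algebraMap kbar (C ⧸ m)) :=
      ⟨(algebraMap kbar (C ⧸ m)).injective,
        IsAlgClosed.algebraMap_bijective_of_isIntegral.2⟩
    let e := AlgEquiv.ofBijective (Algebra.ofId kbar (C ⧸ m)) hbij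
    have h0 := hz (e.symm.toAlgHom.comp (Ideal.Quotient.mkₐ kbar m))
    have h1 : Ideal.Quotient.mk m z = 0 := by
      have := congrArg e h0
      simpa using this
    rwa [← Ideal.Quotient.eq_zero_iff_mem]
  obtain ⟨n, hn⟩ := IsArtinianRing.isNilpotent_jacobson_bot (R := C)
  have hzn : z ^ n = 0 := by
    have : z ^ n ∈ (Ideal.jacobson (⊥ : Ideal C)) ^ n := Ideal.pow_mem_pow hmem n
    rwa [hn, Ideal.zero_eq_bot, Ideal.mem_bot] at this
  exact IsReduced.eq_zero z ⟨n, hzn⟩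

lemma includeRight_inj {A : Type} [CommRing A] [Algebra k A] :
    Function.Injective
      (Algebra.TensorProduct.includeRight : A →ₐ[k] kbar ⊗[k] A) := by
  have h : ⇑(Algebra.TensorProduct.includeRight : A →ₐ[k] kbar ⊗[k] A) =
      (LinearMap.rTensor A (Algebra.ofId k kbar).toLinearMap).comp
        (TensorProduct.lid k A).symm.toLinearMap := by
    ext a
    simp [Algebra.ofId_apply]
  rw [h]
  exact (Module.Flat.rTensor_preserves_injective_linearMap _
    (algebraMap k kbar).injective).comp (TensorProduct.lid k A).symm.injective

/-- Key descent lemma: an element of `k̄ ⊗ A` fixed by all Galois twists with all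
character values separable comes from `A`. -/
lemma fixed_descend [IsAlgClosure k kbar] {A : Type} [CommRing A] [Algebra k A]
    [Algebra.Etale k A] [Module.Finite k A]
    (x : kbar ⊗[k] A)
    (hfix : ∀ g : kbar ≃ₐ[k] kbar,
      Algebra.TensorProduct.map g.toAlgHom (AlgHom.id k A) x = x)
    (hsep : ∀ χ : (kbar ⊗[k] A) →ₐ[kbar] kbar, (minpoly k (χ x)).Separable) :
    ∃ a : A, (1:kbar) ⊗ₜ[k] a = x := by
  classical
  haveI : IsAlgClosed kbar := IsAlgClosure.isAlgClosed k
  set v := Module.finBasis k A with hv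
  set bas := v.baseChange kbar with hbas
  set r : Fin (Module.finrank k A) → kbar := fun i => bas.repr x i with hr
  -- generic representation lemma
  have hrepr : ∀ (c : Fin (Module.finrank k A) → kbar) (j),
      bas.repr (∑ i, c i ⊗ₜ[k] v i) j = c j := by
    intro c j
    rw [map_sum, Finsupp.finset_sum_apply]
    rw [Finset.sum_eq_single j]
    · simp [hbas]
    · intro i _ hij
      simp [hbas, Module.Basis.repr_self, Finsupp.single_apply, hij]
    · simp
  have hx : x = ∑ i, r i ⊗ₜ[k] v i := by
    conv_lhs => rw [← bas.sum_repr x]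
    refine Finset.sum_congr rfl fun i _ => ?_
    rw [hbas, Module.Basis.baseChange_apply, TensorProduct.smul_tmul', smul_eq_mul, mul_one]
  -- the coefficients are Galois-fixed
  have hfixc : ∀ (g : kbar ≃ₐ[k] kbar) i, g (r i) = r i := by
    intro g i
    have h1 : Algebra.TensorProduct.map g.toAlgHom (AlgHom.id k A) x
        = ∑ j, g (r j) ⊗ₜ[k] v j := by
      conv_lhs => rw [hx]
      rw [map_sum]
      rfl
    have h2 : (∑ j, g (r j) ⊗ₜ[k] v j) = ∑ j, r j ⊗ₜ[k] v j := by
      rw [← h1, hfix g, hx]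
    have h3 : bas.repr (∑ j, g (r j) ⊗ₜ[k] v j) i
        = bas.repr (∑ j, r j ⊗ₜ[k] v j) i := by rw [h2]
    rwa [hrepr, hrepr] at h3
  -- the coefficients are separable over k
  set E := separableClosure k kbar with hE
  let lineE : Submodule E kbar := LinearMap.range (Algebra.linearMap E kbar)
  have hlineE : ∀ c : kbar, c ∈ lineE ↔ IsSeparable k c := by
    intro c
    constructor
    · intro h
      obtain ⟨e, he⟩ := LinearMap.mem_range.mp h
      rw [← he]
      simpa using mem_separableClosure_iff.mp e.2
    · intro hc
      exact LinearMap.mem_range.mpr ⟨⟨c, mem_separableClosure_iff.mpr hc⟩, by simp⟩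
  obtain ⟨W, hW⟩ := Submodule.exists_isCompl lineE
  set π := Submodule.projectionOnto W lineE hW.symm with hπ
  have hsepc : ∀ i, IsSeparable k (r i) := by
    intro i0
    set z : kbar ⊗[k] A := ∑ i, ((π (r i) : kbar)) ⊗ₜ[k] v i with hz
    have hzero : z = 0 := by
      apply charsInj (kbar := kbar) z
      intro χ
      have hval : ∀ i, IsSeparable k (χ ((1:kbar) ⊗ₜ[k] v i)) := fun i =>
        sepVal ((χ.restrictScalars k).comp
          (Algebra.TensorProduct.includeRight : A →ₐ[k] kbar ⊗[k] A)) (v i)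
      set t : Fin (Module.finrank k A) → E :=
        fun i => ⟨χ ((1:kbar) ⊗ₜ[k] v i), mem_separableClosure_iff.mpr (hval i)⟩ with ht
      have happ : ∀ (c : Fin (Module.finrank k A) → kbar),
          χ (∑ i, c i ⊗ₜ[k] v i) = ∑ i, t i • c i := by
        intro c
        rw [map_sum]
        refine Finset.sum_congr rfl fun i _ => ?_
        have : c i ⊗ₜ[k] v i = c i • ((1:kbar) ⊗ₜ[k] v i) := by
          rw [TensorProduct.smul_tmul', smul_eq_mul, mul_one]
        rw [this, map_smul, smul_eq_mul]
        show c i * (t i : kbar) = (t i : kbar) * c i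
        ring
      have hπx : π (χ x) = ∑ i, t i • π (r i) := by
        rw [hx, happ, map_sum]
        exact Finset.sum_congr rfl fun i _ => map_smul π (t i) (r i)
      have h0 : π (χ x) = 0 :=
        Submodule.projectionOnto_apply_of_mem_right hW.symm
          ((hlineE (χ x)).mpr (by
            have := hsep χ
            exact this))
      have hχz : χ z = ((π (χ x) : W) : kbar) := by
        rw [hz, happ, hπx]
        push_cast [Submodule.coe_sum]
        rfl
      rw [hχz, h0]
      rfl
    have hπ0 : (π (r i0) : kbar) = 0 := by
      have h3 : bas.repr (∑ i, ((π (r i) : kbar)) ⊗ₜ[k] v i) i0 = 0 := by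
        rw [← hz, hzero, map_zero]
        rfl
      rwa [hrepr] at h3
    have : r i0 ∈ lineE := by
      refine (Submodule.projectionOnto_apply_eq_zero_iff hW.symm).mp ?_
      exact Subtype.ext hπ0
    exact (hlineE _).mp this
  -- conclude
  have hk : ∀ i, ∃ d : k, algebraMap k kbar d = r i := fun i =>
    fixed_sep_mem (r i) (hsepc i) (fun g => hfixc g i)
  choose d hd using hk
  refine ⟨∑ i, d i • v i, ?_⟩
  rw [TensorProduct.tmul_sum, hx]
  refine Finset.sum_congr rfl fun i _ => ?_
  rw [TensorProduct.tmul_smul, TensorProduct.smul_tmul', ← hd i,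
    Algebra.smul_def, mul_one]

lemma tmul_one_inj {A : Type} [CommRing A] [Algebra k A] {a a' : A}
    (h : (1:kbar) ⊗ₜ[k] a = (1:kbar) ⊗ₜ[k] a') : a = a' :=
  includeRight_inj (kbar := kbar) h

noncomputable def descFun {A B : Type} [CommRing A] [Algebra k A]
    [CommRing B] [Algebra k B]
    (F : (kbar ⊗[k] B) →ₐ[kbar] (kbar ⊗[k] A))
    (h : ∀ b : B, ∃ a : A, (1:kbar) ⊗ₜ[k] a = F ((1:kbar) ⊗ₜ[k] b)) : B → A :=
  fun b => Classical.choose (h b)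

lemma descFun_spec {A B : Type} [CommRing A] [Algebra k A]
    [CommRing B] [Algebra k B]
    (F : (kbar ⊗[k] B) →ₐ[kbar] (kbar ⊗[k] A))
    (h : ∀ b : B, ∃ a : A, (1:kbar) ⊗ₜ[k] a = F ((1:kbar) ⊗ₜ[k] b)) (b : B) :
    (1:kbar) ⊗ₜ[k] (descFun F h b) = F ((1:kbar) ⊗ₜ[k] b) :=
  Classical.choose_spec (h b)

/-- Descend a `k̄`-algebra hom whose values on `B` come from `A` to a `k`-algebra hom. -/
noncomputable def descAlgHom {A B : Type} [CommRing A] [Algebra k A]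
    [CommRing B] [Algebra k B]
    (F : (kbar ⊗[k] B) →ₐ[kbar] (kbar ⊗[k] A))
    (h : ∀ b : B, ∃ a : A, (1:kbar) ⊗ₜ[k] a = F ((1:kbar) ⊗ₜ[k] b)) : B →ₐ[k] A :=
  { toFun := descFun F h
    map_one' := tmul_one_inj (kbar := kbar) (by
      rw [descFun_spec F h 1,
        show ((1:kbar) ⊗ₜ[k] (1:B)) = (1 : kbar ⊗[k] B) from rfl, map_one]
      rfl)
    map_mul' := fun b₁ b₂ => tmul_one_inj (kbar := kbar) (by
      rw [descFun_spec F h (b₁ * b₂),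
        show ((1:kbar) ⊗ₜ[k] (b₁ * b₂)) = ((1:kbar) ⊗ₜ[k] b₁) * ((1:kbar) ⊗ₜ[k] b₂) by
          rw [Algebra.TensorProduct.tmul_mul_tmul, one_mul],
        map_mul, ← descFun_spec F h b₁, ← descFun_spec F h b₂,
        Algebra.TensorProduct.tmul_mul_tmul, one_mul])
    map_zero' := tmul_one_inj (kbar := kbar) (by
      rw [descFun_spec F h 0, TensorProduct.tmul_zero, map_zero, TensorProduct.tmul_zero])
    map_add' := fun b₁ b₂ => tmul_one_inj (kbar := kbar) (by
      rw [descFun_spec F h (b₁ + b₂), TensorProduct.tmul_add, map_add,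
        ← descFun_spec F h b₁, ← descFun_spec F h b₂, TensorProduct.tmul_add])
    commutes' := fun c => tmul_one_inj (kbar := kbar) (by
      rw [descFun_spec F h (algebraMap k B c)]
      have h1 : (1:kbar) ⊗ₜ[k] (algebraMap k B c) = algebraMap k (kbar ⊗[k] B) c :=
        (Algebra.TensorProduct.includeRight (R := k) (A := kbar) (B := B)).commutes c
      have h2 : (1:kbar) ⊗ₜ[k] (algebraMap k A c) = algebraMap k (kbar ⊗[k] A) c :=
        (Algebra.TensorProduct.includeRight (R := k) (A := kbar) (B := A)).commutes c
      rw [h1, h2, IsScalarTower.algebraMap_apply k kbar (kbar ⊗[k] B),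
        F.commutes, ← IsScalarTower.algebraMap_apply]) }

lemma descAlgHom_spec {A B : Type} [CommRing A] [Algebra k A]
    [CommRing B] [Algebra k B]
    (F : (kbar ⊗[k] B) →ₐ[kbar] (kbar ⊗[k] A))
    (h : ∀ b : B, ∃ a : A, (1:kbar) ⊗ₜ[k] a = F ((1:kbar) ⊗ₜ[k] b)) (b : B) :
    (1:kbar) ⊗ₜ[k] (descAlgHom F h b) = F ((1:kbar) ⊗ₜ[k] b) :=
  descFun_spec F h b

end helpers

/-- Let `k` be a field with algebraic closure `k̄` and absolute Galois
group `G`, and let `X = Spec A`, `Y = Spec B` be finite étale `k`-schemes.  Then the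
natural base-change map `Hom_k(X,Y) → Hom_{k̄}(X_{k̄},Y_{k̄})` is injective with image
exactly the `G`-fixed points.  In algebraic terms: `k`-algebra maps `B →ₐ[k] A` are
in bijection with those `k̄`-algebra maps `F : k̄ ⊗[k] B →ₐ[k̄] k̄ ⊗[k] A` fixed under
conjugation by every `g ∈ G` (twisting both source and target by the Galois action),
the bijection being given by base change `f ↦ id_{k̄} ⊗ f`. -/
theorem stmt10 (k kbar A B : Type) [Field k] [Field kbar] [Algebra k kbar]
    [IsAlgClosure k kbar]
    [CommRing A] [Algebra k A] [Algebra.Etale k A] [Module.Finite k A]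
    [CommRing B] [Algebra k B] [Algebra.Etale k B] [Module.Finite k B] :
    ∃ e : (B →ₐ[k] A) ≃
        {F : (kbar ⊗[k] B) →ₐ[kbar] (kbar ⊗[k] A) //
          ∀ g : kbar ≃ₐ[k] kbar,
            (Algebra.TensorProduct.map g.toAlgHom (AlgHom.id k A)).comp
              ((F.restrictScalars k).comp
                (Algebra.TensorProduct.map g.symm.toAlgHom (AlgHom.id k B)))
              = F.restrictScalars k},
      ∀ f : B →ₐ[k] A,
        ((e f : (kbar ⊗[k] B) →ₐ[kbar] (kbar ⊗[k] A)).restrictScalars k)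
          = Algebra.TensorProduct.map (AlgHom.id k kbar) f := by
  classical
  haveI : IsAlgClosed kbar := IsAlgClosure.isAlgClosed k
  -- the base-change (forward) map
  let fwd : (B →ₐ[k] A) → ((kbar ⊗[k] B) →ₐ[kbar] (kbar ⊗[k] A)) :=
    fun f => Algebra.TensorProduct.map (AlgHom.id kbar kbar) f
  have fwd_tmul : ∀ (f : B →ₐ[k] A) (c : kbar) (b : B),
      fwd f (c ⊗ₜ[k] b) = c ⊗ₜ[k] f b := fun f c b => rfl
  have hcond : ∀ f : B →ₐ[k] A, ∀ g : kbar ≃ₐ[k] kbar,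
      (Algebra.TensorProduct.map g.toAlgHom (AlgHom.id k A)).comp
        (((fwd f).restrictScalars k).comp
          (Algebra.TensorProduct.map g.symm.toAlgHom (AlgHom.id k B)))
        = (fwd f).restrictScalars k := by
    intro f g
    apply AlgHom.toLinearMap_injective
    apply TensorProduct.ext'
    intro c b
    simp [fwd]
  -- values of fixed homs are Galois-fixed and separable, so they descend
  have hexists : ∀ F : {F : (kbar ⊗[k] B) →ₐ[kbar] (kbar ⊗[k] A) //
      ∀ g : kbar ≃ₐ[k] kbar,
        (Algebra.TensorProduct.map g.toAlgHom (AlgHom.id k A)).comp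
          ((F.restrictScalars k).comp
            (Algebra.TensorProduct.map g.symm.toAlgHom (AlgHom.id k B)))
          = F.restrictScalars k},
      ∀ b : B, ∃ a : A, (1:kbar) ⊗ₜ[k] a = F.1 ((1:kbar) ⊗ₜ[k] b) := by
    intro F b
    apply fixed_descend
    · intro g
      have hg := AlgHom.congr_fun (F.2 g) ((1:kbar) ⊗ₜ[k] b)
      simpa using hg
    · intro χ
      exact sepVal ((χ.comp F.1).restrictScalars k |>.comp
        (Algebra.TensorProduct.includeRight : B →ₐ[k] kbar ⊗[k] B)) b
  -- assemble the equivalence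
  refine ⟨{ toFun := fun f => ⟨fwd f, hcond f⟩
            invFun := fun F => descAlgHom F.1 (hexists F)
            left_inv := ?_
            right_inv := ?_ }, ?_⟩
  · intro f
    apply AlgHom.ext
    intro b
    apply tmul_one_inj (k := k) (kbar := kbar)
    rw [descAlgHom_spec, fwd_tmul]
  · intro F
    apply Subtype.ext
    apply AlgHom.restrictScalars_injective k
    apply AlgHom.toLinearMap_injective
    apply TensorProduct.ext'
    intro c b
    show fwd (descAlgHom F.1 (hexists F)) (c ⊗ₜ[k] b) = F.1 (c ⊗ₜ[k] b)
    have hc : c ⊗ₜ[k] b = c • ((1:kbar) ⊗ₜ[k] b) := by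
      rw [TensorProduct.smul_tmul', smul_eq_mul, mul_one]
    rw [fwd_tmul, hc, map_smul, ← descAlgHom_spec F.1 (hexists F) b,
      TensorProduct.smul_tmul', smul_eq_mul, mul_one]
  · intro f
    apply AlgHom.toLinearMap_injective
    apply TensorProduct.ext'
    intro c b
    rfl
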